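/- Let ν ≥ 1 and let θ : [0, ∞) → ℝ be continuous with θ(r)^ν truncated at 0 (i.e., consider θ₊^ν where θ₊ = max{0,θ}), and suppose ψ : [0, ξ₁] → ℝ is a C² solution on (0, ξ₁) of ψ'' + (2/r)ψ' − (j(j+1)/r²)ψ + ν θ₊(r)^{ν−1} ψ = 0 for some integer j ≥ 1, with ψ(r) > 0 and ψ'(r) > 0 for all sufficiently small r > 0. If ν θ₊(r)^{ν−1} r² < j(j+1) for all r ∈ [0, ξ₁], then ψ'(r) > 0 for all r ∈ (0, ξ₁), i.e., ψ is strictly increasing on (0, ξ₁). -/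

import Mathlib

theorem stmt_11 (ν ξ₁ : ℝ) (hν : 1 ≤ ν) (hξ : 0 < ξ₁) (j : ℕ) (hj : 1 ≤ j)
    (θ : ℝ → ℝ) (hθ : ContinuousOn θ (Set.Ici 0))
    (ψ : ℝ → ℝ) (hψ : ContDiffOn ℝ 2 ψ (Set.Ioo 0 ξ₁))
    (hode : ∀ r ∈ Set.Ioo 0 ξ₁,
      deriv (deriv ψ) r + (2 / r) * deriv ψ r -
        ((j : ℝ) * ((j : ℝ) + 1) / r ^ 2) * ψ r +
        ν * (max 0 (θ r)) ^ (ν - 1) * ψ r = 0)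
    (hsmall : ∃ δ > 0, ∀ r ∈ Set.Ioo (0:ℝ) δ, 0 < ψ r ∧ 0 < deriv ψ r)
    (hbound : ∀ r ∈ Set.Icc 0 ξ₁,
      ν * (max 0 (θ r)) ^ (ν - 1) * r ^ 2 < (j : ℝ) * ((j : ℝ) + 1)) :
    ∀ r ∈ Set.Ioo 0 ξ₁, 0 < deriv ψ r := by
  obtain ⟨δ, hδ, h1⟩ := hsmall
  have hopen : IsOpen (Set.Ioo (0:ℝ) ξ₁) := isOpen_Ioo
  have hd1 : ContDiffOn ℝ 1 (deriv ψ) (Set.Ioo 0 ξ₁) :=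
    hψ.deriv_of_isOpen hopen (by norm_num)
  have hdiff2 : ∀ x ∈ Set.Ioo (0:ℝ) ξ₁, DifferentiableAt ℝ (deriv ψ) x := fun x hx =>
    (hd1.differentiableOn one_ne_zero).differentiableAt (hopen.mem_nhds hx)
  have hcont1 : ContinuousOn (deriv ψ) (Set.Ioo 0 ξ₁) := hd1.continuousOn
  by_contra hcon
  push_neg at hcon
  obtain ⟨r₀, hr₀, hr₀le⟩ := hcon
  have hδr₀ : δ ≤ r₀ := by
    by_contra h
    push_neg at h
    exact absurd (h1 r₀ ⟨hr₀.1, h⟩).2 (not_lt.2 hr₀le)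
  set B := Set.Icc δ r₀ ∩ (deriv ψ) ⁻¹' Set.Iic 0 with hB
  have hBne : B.Nonempty := ⟨r₀, ⟨hδr₀, le_rfl⟩, hr₀le⟩
  have hBsub : Set.Icc δ r₀ ⊆ Set.Ioo 0 ξ₁ := fun x hx =>
    ⟨lt_of_lt_of_le hδ hx.1, lt_of_le_of_lt hx.2 hr₀.2⟩
  have hBclosed : IsClosed B :=
    (hcont1.mono hBsub).preimage_isClosed_of_isClosed isClosed_Icc isClosed_Iic
  have hBcompact : IsCompact B :=
    (isCompact_Icc).of_isClosed_subset hBclosed Set.inter_subset_left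
  set r₁ := sInf B with hr₁def
  have hr₁B : r₁ ∈ B := hBcompact.sInf_mem hBne
  have hδr₁ : δ ≤ r₁ := hr₁B.1.1
  have hr₁lt : r₁ < ξ₁ := lt_of_le_of_lt hr₁B.1.2 hr₀.2
  have hr₁pos : 0 < r₁ := lt_of_lt_of_le hδ hδr₁
  have hr₁le : deriv ψ r₁ ≤ 0 := hr₁B.2
  have dpos : ∀ r ∈ Set.Ioo (0:ℝ) r₁, 0 < deriv ψ r := by
    intro r hr
    rcases lt_or_ge r δ with h | h
    · exact (h1 r ⟨hr.1, h⟩).2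
    · by_contra hle
      push_neg at hle
      have : r ∈ B := ⟨⟨h, le_trans hr.2.le hr₁B.1.2⟩, hle⟩
      exact absurd (csInf_le hBcompact.bddBelow this) (not_le.2 hr.2)
  have ψpos : ∀ x ∈ Set.Ioc (0:ℝ) r₁, 0 < ψ x := by
    intro x hx
    rcases lt_or_ge x δ with h | h
    · exact (h1 x ⟨hx.1, h⟩).1
    · have hε : (0:ℝ) < δ/2 := by linarith
      have hsub : Set.Icc (δ/2) x ⊆ Set.Ioo 0 ξ₁ := fun y hy =>
        ⟨lt_of_lt_of_le hε hy.1, lt_of_le_of_lt (le_trans hy.2 hx.2) hr₁lt⟩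
      have hmono : StrictMonoOn ψ (Set.Icc (δ/2) x) := by
        apply strictMonoOn_of_deriv_pos (convex_Icc _ _)
          ((hψ.continuousOn).mono hsub)
        intro y hy
        rw [interior_Icc] at hy
        exact dpos y ⟨lt_of_lt_of_le hε hy.1.le, lt_of_lt_of_le hy.2 hx.2⟩
      have h2 : ψ (δ/2) < ψ x := hmono ⟨le_rfl, by linarith⟩ ⟨by linarith, le_rfl⟩ (by linarith)
      have := (h1 (δ/2) ⟨hε, by linarith⟩).1
      linarith
  -- the auxiliary function w
  set w : ℝ → ℝ := fun x => x ^ 2 * deriv ψ x with hw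
  have hwderiv : ∀ x ∈ Set.Ioo (0:ℝ) ξ₁, HasDerivAt w
      ((((j : ℝ) * ((j : ℝ) + 1)) - ν * (max 0 (θ x)) ^ (ν - 1) * x ^ 2) * ψ x) x := by
    intro x hx
    have h2 : HasDerivAt (deriv ψ) (deriv (deriv ψ) x) x := (hdiff2 x hx).hasDerivAt
    have hp : HasDerivAt (fun y : ℝ => y ^ 2) (2 * x) x := by
      simpa using hasDerivAt_pow 2 x
    have hmul := hp.mul h2
    convert hmul using 1
    · rfl
    · rfl
    · rfl
    have ho := hode x hx
    have hx0 : x ≠ 0 := ne_of_gt hx.1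
    field_simp at ho
    have key : x * ((((j : ℝ) * ((j : ℝ) + 1)) - ν * (max 0 (θ x)) ^ (ν - 1) * x ^ 2) * ψ x
        - (2 * x * deriv ψ x + x ^ 2 * deriv (deriv ψ) x)) = 0 := by linear_combination (-x) * ho
    have h0 := (mul_eq_zero.mp key).resolve_left hx0
    linarith
  -- contradiction
  have hε : (0:ℝ) < δ/2 := by linarith
  have hsub2 : Set.Icc (δ/2) r₁ ⊆ Set.Ioo 0 ξ₁ := fun y hy =>
    ⟨lt_of_lt_of_le hε hy.1, lt_of_le_of_lt hy.2 hr₁lt⟩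
  have hwmono : StrictMonoOn w (Set.Icc (δ/2) r₁) := by
    apply strictMonoOn_of_deriv_pos (convex_Icc _ _)
    · exact ((continuous_pow 2).continuousOn).mul (hcont1.mono hsub2)
    · intro y hy
      rw [interior_Icc] at hy
      have hy' : y ∈ Set.Ioo (0:ℝ) ξ₁ := ⟨lt_trans hε hy.1, lt_trans hy.2 hr₁lt⟩
      rw [(hwderiv y hy').deriv]
      have hc : ν * (max 0 (θ y)) ^ (ν - 1) * y ^ 2 < (j : ℝ) * ((j : ℝ) + 1) :=
        hbound y ⟨hy'.1.le, hy'.2.le⟩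
      have hψy : 0 < ψ y := ψpos y ⟨hy'.1, hy.2.le⟩
      nlinarith
  have hlt : w (δ/2) < w r₁ :=
    hwmono ⟨le_rfl, by linarith⟩ ⟨by linarith, le_rfl⟩ (by linarith)
  have hw1 : 0 < w (δ/2) := by
    have := (h1 (δ/2) ⟨hε, by linarith⟩).2
    have : (0:ℝ) < (δ/2)^2 * deriv ψ (δ/2) := by positivity
    simpa [hw] using this
  have hw2 : w r₁ ≤ 0 := by
    have : r₁ ^ 2 * deriv ψ r₁ ≤ 0 :=
      mul_nonpos_of_nonneg_of_nonpos (sq_nonneg r₁) hr₁le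
    simpa [hw] using this
  linarith
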